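/- If (U, R, 𝓕) is an sL-approximation space, then (𝔠(U, R, 𝓕), ⊆) is an sL-domain. -/

import Mathlib

open Set

/-- The upper approximation operator: `upp R A = {x | ∃ y ∈ A, x R y}`. -/
def upp {U : Type*} (R : U → U → Prop) (A : Set U) : Set U := {x | ∃ y ∈ A, R x y}

/-- `(U, R, 𝓕)` is a CF-approximation space. -/
def IsCFApprox {U : Type*} (R : U → U → Prop) (𝓕 : Set (Set U)) : Prop :=
  Transitive R ∧ 𝓕.Nonempty ∧ (∀ F ∈ 𝓕, F.Finite) ∧
    ∀ F ∈ 𝓕, ∀ K : Set U, K.Finite → K ⊆ upp R F →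
      ∃ G ∈ 𝓕, K ⊆ upp R G ∧ G ⊆ upp R F

/-- `E` is a CF-closed set of `(U, R, 𝓕)`. -/
def CFClosed {U : Type*} (R : U → U → Prop) (𝓕 : Set (Set U)) (E : Set U) : Prop :=
  ∀ K : Set U, K.Finite → K ⊆ E →
    ∃ F ∈ 𝓕, K ⊆ upp R F ∧ upp R F ⊆ E ∧ F ⊆ E

/-- The join saturation `𝓕^♯`: all unions of nonempty finite subfamilies of `𝓕`. -/
def joinSat {U : Type*} (𝓕 : Set (Set U)) : Set (Set U) :=
  {A | ∃ 𝓐 : Set (Set U), 𝓐 ⊆ 𝓕 ∧ 𝓐.Finite ∧ 𝓐.Nonempty ∧ A = ⋃₀ 𝓐}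

/-- `S(M, F)`: the set of `G ∈ 𝓕` satisfying (sL-1) and (sL-2). -/
def SFam {U : Type*} (R : U → U → Prop) (𝓕 : Set (Set U)) (M F : Set U) : Set (Set U) :=
  {G | G ∈ 𝓕 ∧ upp R M ⊆ upp R G ∧ upp R G ⊆ upp R F ∧
    ∀ G' ∈ 𝓕, upp R M ⊆ upp R G' → upp R G' ⊆ upp R F → upp R G ⊆ upp R G'}

/-- `S*(M, F) = {G ∈ S(M, F) | G ⊆ upp R F}`. -/
def SStar {U : Type*} (R : U → U → Prop) (𝓕 : Set (Set U)) (M F : Set U) : Set (Set U) :=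
  {G | G ∈ SFam R 𝓕 M F ∧ G ⊆ upp R F}

/-- sL-approximation space. -/
def IsSLApprox {U : Type*} (R : U → U → Prop) (𝓕 : Set (Set U)) : Prop :=
  IsCFApprox R 𝓕 ∧
    ∀ M ∈ joinSat 𝓕, ∀ F ∈ 𝓕, M ⊆ upp R F → (SFam R 𝓕 M F).Nonempty

/-- L-approximation space. -/
def IsLApprox {U : Type*} (R : U → U → Prop) (𝓕 : Set (Set U)) : Prop :=
  IsCFApprox R 𝓕 ∧
    ∀ M ∈ joinSat 𝓕 ∪ {(∅ : Set U)}, ∀ F ∈ 𝓕, M ⊆ upp R F → (SFam R 𝓕 M F).Nonempty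

/-- bc-approximation space. -/
def IsBCApprox {U : Type*} (R : U → U → Prop) (𝓕 : Set (Set U)) : Prop :=
  IsCFApprox R 𝓕 ∧
    ∀ M ∈ joinSat 𝓕 ∪ {(∅ : Set U)}, ∀ F ∈ 𝓕, M ⊆ upp R F →
      ∃ G ∈ 𝓕, upp R M ⊆ upp R G ∧ upp R G ⊆ upp R F ∧
        ∀ G' ∈ 𝓕, upp R M ⊆ upp R G' → upp R G ⊆ upp R G'

/-- A dcpo: every (nonempty) directed subset has a supremum. -/
def IsDcpo (P : Type*) [PartialOrder P] : Prop :=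
  ∀ D : Set P, D.Nonempty → DirectedOn (· ≤ ·) D → ∃ s, IsLUB D s

/-- The way-below relation `x ≪ y`. -/
def WayBelow {P : Type*} [PartialOrder P] (x y : P) : Prop :=
  ∀ D : Set P, D.Nonempty → DirectedOn (· ≤ ·) D →
    ∀ s, IsLUB D s → y ≤ s → ∃ d ∈ D, x ≤ d

/-- Continuous domain: a dcpo in which for every `x` the set `{z | z ≪ x}` is
directed with supremum `x`. -/
def IsContinuousDomain (P : Type*) [PartialOrder P] : Prop :=
  IsDcpo P ∧ ∀ x : P, {z | WayBelow z x}.Nonempty ∧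
    DirectedOn (· ≤ ·) {z | WayBelow z x} ∧ IsLUB {z | WayBelow z x} x

/-- Algebraic domain: a dcpo in which for every `x` the set `↓x ∩ K(P)` is
directed with supremum `x`. -/
def IsAlgebraicDomain (P : Type*) [PartialOrder P] : Prop :=
  IsDcpo P ∧ ∀ x : P, ({k | k ≤ x ∧ WayBelow k k}).Nonempty ∧
    DirectedOn (· ≤ ·) {k | k ≤ x ∧ WayBelow k k} ∧
    IsLUB {k | k ≤ x ∧ WayBelow k k} x

/-- sL-domain: a continuous domain in which every principal ideal is a
sup-semilattice. -/
def IsSLDomain (P : Type*) [PartialOrder P] : Prop :=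
  IsContinuousDomain P ∧ ∀ x a b : P, a ≤ x → b ≤ x →
    ∃ s, s ≤ x ∧ a ≤ s ∧ b ≤ s ∧ ∀ t, t ≤ x → a ≤ t → b ≤ t → s ≤ t

/-- L-domain: a continuous domain in which every principal ideal is a
complete lattice (every subset of `↓x` has a least upper bound in `↓x`). -/
def IsLDomain (P : Type*) [PartialOrder P] : Prop :=
  IsContinuousDomain P ∧ ∀ (x : P) (A : Set P), (∀ a ∈ A, a ≤ x) →
    ∃ s, s ≤ x ∧ (∀ a ∈ A, a ≤ s) ∧ ∀ t, t ≤ x → (∀ a ∈ A, a ≤ t) → s ≤ t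

/-- bc-domain: a continuous domain in which every up-bounded subset has a
supremum. -/
def IsBCDomain (P : Type*) [PartialOrder P] : Prop :=
  IsContinuousDomain P ∧ ∀ A : Set P, (∃ b, ∀ a ∈ A, a ≤ b) → ∃ s, IsLUB A s

section AuxStmt10

variable {U : Type*} {R : U → U → Prop} {𝓕 : Set (Set U)}

lemma upp_mono {A B : Set U} (h : A ⊆ B) : upp R A ⊆ upp R B :=
  fun _ ⟨y, hy, hr⟩ => ⟨y, h hy, hr⟩

lemma upp_sub (hT : Transitive R) {A B : Set U} (h : B ⊆ upp R A) :
    upp R B ⊆ upp R A := by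
  rintro x ⟨y, hy, hr⟩
  obtain ⟨z, hz, hrz⟩ := h hy
  exact ⟨z, hz, hT hr hrz⟩

lemma upp_CFClosed (hCF : IsCFApprox R 𝓕) {F : Set U} (hF : F ∈ 𝓕) :
    CFClosed R 𝓕 (upp R F) := fun K hKfin hKsub => by
  obtain ⟨G, hG, hKG, hGF⟩ := hCF.2.2.2 F hF K hKfin hKsub
  exact ⟨G, hG, hKG, upp_sub hCF.1 hGF, hGF⟩

lemma upp_subset_closed (hCF : IsCFApprox R 𝓕) {E F : Set U} (hE : CFClosed R 𝓕 E)
    (hF : F ∈ 𝓕) (hFE : F ⊆ E) : upp R F ⊆ E := by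
  obtain ⟨H, _, hFH, hHE, _⟩ := hE F (hCF.2.2.1 F hF) hFE
  exact (upp_sub hCF.1 hFH).trans hHE

lemma closed_ex {E K : Set U} (hE : CFClosed R 𝓕 E) (hK : K.Finite) (hKE : K ⊆ E) :
    ∃ F ∈ 𝓕, F ⊆ E ∧ K ⊆ upp R F := by
  obtain ⟨F, hF, h1, _, h3⟩ := hE K hK hKE
  exact ⟨F, hF, h3, h1⟩

lemma exists_mem_of_finite_subset_sUnion {α : Type*} {𝒟 : Set (Set α)}
    (hne : 𝒟.Nonempty) (hdir : DirectedOn (· ⊆ ·) 𝒟) {K : Set α} (hK : K.Finite) :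
    K ⊆ ⋃₀ 𝒟 → ∃ D ∈ 𝒟, K ⊆ D := by
  refine Set.Finite.induction_on _ hK
    (fun _ => hne.imp fun D hD => ⟨hD, empty_subset D⟩)
    (fun {x K} _ _ ih hsub => ?_)
  obtain ⟨D₁, hD₁, hKD₁⟩ := ih ((subset_insert _ _).trans hsub)
  obtain ⟨D₂, hD₂, hxD₂⟩ := hsub (mem_insert _ _)
  obtain ⟨D₃, hD₃, h13, h23⟩ := hdir D₁ hD₁ D₂ hD₂
  exact ⟨D₃, hD₃, insert_subset (h23 hxD₂) (hKD₁.trans h13)⟩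

lemma sUnion_CFClosed (hCF : IsCFApprox R 𝓕) {𝒟 : Set (Set U)}
    (h : ∀ D ∈ 𝒟, CFClosed R 𝓕 D) (hne : 𝒟.Nonempty)
    (hdir : DirectedOn (· ⊆ ·) 𝒟) : CFClosed R 𝓕 (⋃₀ 𝒟) := by
  intro K hKfin hKsub
  obtain ⟨D, hD, hKD⟩ := exists_mem_of_finite_subset_sUnion hne hdir hKfin hKsub
  obtain ⟨F, hF, h1, h2, h3⟩ := h D hD K hKfin hKD
  exact ⟨F, hF, h1, h2.trans (subset_sUnion_of_mem hD),
    h3.trans (subset_sUnion_of_mem hD)⟩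

lemma SFam_upp_eq {M F G₁ G₂ : Set U} (h₁ : G₁ ∈ SFam R 𝓕 M F)
    (h₂ : G₂ ∈ SFam R 𝓕 M F) : upp R G₁ = upp R G₂ :=
  subset_antisymm (h₁.2.2.2 G₂ h₂.1 h₂.2.1 h₂.2.2.1) (h₂.2.2.2 G₁ h₁.1 h₁.2.1 h₁.2.2.1)

/-- Key independence: the upper approximation of a minimal element of `S(M,F)`
does not depend on `F` as long as `upp F₁ ⊆ upp F₂`. -/
lemma SFam_upp_eq' {M F₁ F₂ G₁ G₂ : Set U} (h12 : upp R F₁ ⊆ upp R F₂)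
    (h₁ : G₁ ∈ SFam R 𝓕 M F₁) (h₂ : G₂ ∈ SFam R 𝓕 M F₂) :
    upp R G₁ = upp R G₂ := by
  have hc : upp R G₂ ⊆ upp R G₁ := h₂.2.2.2 G₁ h₁.1 h₁.2.1 (h₁.2.2.1.trans h12)
  exact SFam_upp_eq h₁ ⟨h₂.1, h₂.2.1, hc.trans h₁.2.2.1,
    fun G' hG' hM hF => h₂.2.2.2 G' hG' hM (hF.trans h12)⟩

lemma pair_mem_joinSat {Fa Fb : Set U} (ha : Fa ∈ 𝓕) (hb : Fb ∈ 𝓕) :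
    Fa ∪ Fb ∈ joinSat 𝓕 := by
  refine ⟨{Fa, Fb}, ?_, (Set.finite_singleton Fb).insert Fa,
    ⟨Fa, mem_insert _ _⟩, (sUnion_pair Fa Fb).symm⟩
  intro X hX
  rcases hX with rfl | hX
  · exact ha
  · rw [mem_singleton_iff] at hX; subst hX; exact hb

lemma isLUB_sUnion (hCF : IsCFApprox R 𝓕)
    {D : Set {E : Set U // CFClosed R 𝓕 E}} (hne : D.Nonempty)
    (hdir : DirectedOn (· ≤ ·) D) :
    IsLUB D ⟨⋃₀ (Subtype.val '' D), sUnion_CFClosed hCF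
      (by rintro _ ⟨d, _, rfl⟩; exact d.2) (hne.image _)
      (by rintro _ ⟨d₁, h₁, rfl⟩ _ ⟨d₂, h₂, rfl⟩
          obtain ⟨d₃, h₃, l₁, l₂⟩ := hdir d₁ h₁ d₂ h₂
          exact ⟨d₃, mem_image_of_mem _ h₃, l₁, l₂⟩)⟩ := by
  constructor
  · intro d hd
    exact subset_sUnion_of_mem (mem_image_of_mem _ hd)
  · intro t ht
    show ⋃₀ (Subtype.val '' D) ⊆ t.val
    rintro x ⟨_, ⟨d, hd, rfl⟩, hx⟩
    exact ht hd hx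

lemma cf_isDcpo (hCF : IsCFApprox R 𝓕) : IsDcpo {E : Set U // CFClosed R 𝓕 E} :=
  fun D hne hdir => ⟨_, isLUB_sUnion hCF hne hdir⟩

lemma basis_wayBelow (hCF : IsCFApprox R 𝓕) {E F : Set U} (hE : CFClosed R 𝓕 E)
    (hF : F ∈ 𝓕) (hFE : F ⊆ E) :
    WayBelow (⟨upp R F, upp_CFClosed hCF hF⟩ : {E : Set U // CFClosed R 𝓕 E})
      ⟨E, hE⟩ := by
  intro D hne hdir s hs hEs
  have hval : s = ⟨⋃₀ (Subtype.val '' D), _⟩ := hs.unique (isLUB_sUnion hCF hne hdir)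
  have hFU : F ⊆ ⋃₀ (Subtype.val '' D) := by
    have : F ⊆ s.val := hFE.trans hEs
    rw [hval] at this
    exact this
  have hdir' : DirectedOn (· ⊆ ·) (Subtype.val '' D) := by
    rintro _ ⟨d₁, h₁, rfl⟩ _ ⟨d₂, h₂, rfl⟩
    obtain ⟨d₃, h₃, l₁, l₂⟩ := hdir d₁ h₁ d₂ h₂
    exact ⟨d₃, mem_image_of_mem _ h₃, l₁, l₂⟩
  obtain ⟨_, ⟨d, hd, rfl⟩, hFd⟩ :=
    exists_mem_of_finite_subset_sUnion (hne.image _) hdir' (hCF.2.2.1 F hF) hFU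
  exact ⟨d, hd, upp_subset_closed hCF d.2 hF hFd⟩

/-- The basis family of a CF-closed set. -/
def basisFam (R : U → U → Prop) (𝓕 : Set (Set U)) (E : Set U) :
    Set {E : Set U // CFClosed R 𝓕 E} :=
  {z | ∃ F ∈ 𝓕, F ⊆ E ∧ z.val = upp R F}

lemma basisFam_nonempty (hE : CFClosed R 𝓕 E) (hCF : IsCFApprox R 𝓕) :
    (basisFam R 𝓕 E).Nonempty := by
  obtain ⟨F, hF, hFE, _⟩ := closed_ex hE finite_empty (empty_subset E)
  exact ⟨⟨upp R F, upp_CFClosed hCF hF⟩, F, hF, hFE, rfl⟩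

lemma basisFam_directed {E : Set U} (hE : CFClosed R 𝓕 E) (hCF : IsCFApprox R 𝓕) :
    DirectedOn (· ≤ ·) (basisFam R 𝓕 E) := by
  rintro z₁ ⟨F₁, hF₁, hFE₁, hz₁⟩ z₂ ⟨F₂, hF₂, hFE₂, hz₂⟩
  obtain ⟨F₃, hF₃, hFE₃, hsub⟩ := closed_ex hE
    ((hCF.2.2.1 F₁ hF₁).union (hCF.2.2.1 F₂ hF₂)) (union_subset hFE₁ hFE₂)
  refine ⟨⟨upp R F₃, upp_CFClosed hCF hF₃⟩, ⟨F₃, hF₃, hFE₃, rfl⟩, ?_, ?_⟩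
  · show z₁.val ⊆ upp R F₃
    rw [hz₁]
    exact upp_sub hCF.1 ((subset_union_left).trans hsub)
  · show z₂.val ⊆ upp R F₃
    rw [hz₂]
    exact upp_sub hCF.1 ((subset_union_right).trans hsub)

lemma basisFam_isLUB {E : Set U} (hE : CFClosed R 𝓕 E) (hCF : IsCFApprox R 𝓕) :
    IsLUB (basisFam R 𝓕 E) ⟨E, hE⟩ := by
  constructor
  · rintro z ⟨F, hF, hFE, hz⟩
    show z.val ⊆ E
    rw [hz]
    exact upp_subset_closed hCF hE hF hFE
  · intro t ht
    show E ⊆ t.val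
    intro x hx
    obtain ⟨F, hF, hFE, hxF⟩ := closed_ex hE (finite_singleton x)
      (singleton_subset_iff.mpr hx)
    have : (⟨upp R F, upp_CFClosed hCF hF⟩ :
        {E : Set U // CFClosed R 𝓕 E}) ∈ basisFam R 𝓕 E := ⟨F, hF, hFE, rfl⟩
    exact ht this (hxF (mem_singleton x))

lemma wayBelow_le {P : Type*} [PartialOrder P] {x y : P} (h : WayBelow x y) :
    x ≤ y := by
  obtain ⟨d, hd, hle⟩ := h {y} ⟨y, rfl⟩
    (directedOn_singleton y) y
    isLUB_singleton (le_refl y)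
  rw [mem_singleton_iff] at hd
  exact hd ▸ hle

lemma cf_continuous (hCF : IsCFApprox R 𝓕) :
    IsContinuousDomain {E : Set U // CFClosed R 𝓕 E} := by
  refine ⟨cf_isDcpo hCF, fun x => ?_⟩
  obtain ⟨x, hx⟩ := x
  have hBsub : basisFam R 𝓕 x ⊆ {z | WayBelow z ⟨x, hx⟩} := by
    rintro z ⟨F, hF, hFE, hz⟩
    have := basis_wayBelow hCF hx hF hFE
    have hzeq : z = ⟨upp R F, upp_CFClosed hCF hF⟩ := Subtype.ext hz
    rw [hzeq]
    exact this
  have hBne := basisFam_nonempty hx hCF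
  have hBdir := basisFam_directed hx hCF
  have hBlub := basisFam_isLUB hx hCF
  refine ⟨hBne.mono hBsub, ?_, ?_⟩
  · -- directedness of the way-below set
    intro z₁ h₁ z₂ h₂
    obtain ⟨d₁, hd₁, hl₁⟩ := h₁ (basisFam R 𝓕 x) hBne hBdir _ hBlub (le_refl _)
    obtain ⟨d₂, hd₂, hl₂⟩ := h₂ (basisFam R 𝓕 x) hBne hBdir _ hBlub (le_refl _)
    obtain ⟨d₃, hd₃, l₁, l₂⟩ := hBdir d₁ hd₁ d₂ hd₂
    exact ⟨d₃, hBsub hd₃, hl₁.trans l₁, hl₂.trans l₂⟩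
  · constructor
    · intro z hz
      exact wayBelow_le hz
    · intro t ht
      exact hBlub.2 fun z hz => ht (hBsub hz)

end AuxStmt10

/-- if `(U, R, 𝓕)` is an sL-approximation space, then
`(𝔠(U, R, 𝓕), ⊆)` is an sL-domain. -/
theorem stmt10 {U : Type*} (R : U → U → Prop) (𝓕 : Set (Set U))
    (hSL : IsSLApprox R 𝓕) :
    IsSLDomain {E : Set U // CFClosed R 𝓕 E} := by
  obtain ⟨hCF, hS⟩ := hSL
  refine ⟨cf_continuous hCF, ?_⟩
  rintro ⟨E, hE⟩ ⟨A, hA⟩ ⟨B, hB⟩ hAE hBE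
  replace hAE : A ⊆ E := hAE
  replace hBE : B ⊆ E := hBE
  -- the family of configurations
  set 𝒟 : Set (Set U) := {D | ∃ Fa Fb F G, Fa ∈ 𝓕 ∧ Fa ⊆ A ∧ Fb ∈ 𝓕 ∧ Fb ⊆ B ∧
    F ∈ 𝓕 ∧ F ⊆ E ∧ Fa ∪ Fb ⊆ upp R F ∧ G ∈ SFam R 𝓕 (Fa ∪ Fb) F ∧
    D = upp R G} with h𝒟
  have hT := hCF.1
  have hfin : ∀ F ∈ 𝓕, Set.Finite F := hCF.2.2.1
  -- helper: extend a configuration "core" to a full configuration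
  have hext : ∀ Fa Fb : Set U, Fa ∈ 𝓕 → Fa ⊆ A → Fb ∈ 𝓕 → Fb ⊆ B →
      ∃ F G, F ∈ 𝓕 ∧ F ⊆ E ∧ Fa ∪ Fb ⊆ upp R F ∧ G ∈ SFam R 𝓕 (Fa ∪ Fb) F := by
    intro Fa Fb hFa hFaA hFb hFbB
    obtain ⟨F, hF, hFE, hsub⟩ := closed_ex hE ((hfin Fa hFa).union (hfin Fb hFb))
      (union_subset (hFaA.trans hAE) (hFbB.trans hBE))
    obtain ⟨G, hG⟩ := hS (Fa ∪ Fb) (pair_mem_joinSat hFa hFb) F hF hsub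
    exact ⟨F, G, hF, hFE, hsub, hG⟩
  -- key: upp R G only depends on M, not on F
  have hindep : ∀ M F₁ F₂ G₁ G₂ : Set U, F₁ ∈ 𝓕 → F₁ ⊆ E → F₂ ∈ 𝓕 → F₂ ⊆ E →
      M ⊆ upp R F₁ → G₁ ∈ SFam R 𝓕 M F₁ → G₂ ∈ SFam R 𝓕 M F₂ → M ∈ joinSat 𝓕 →
      upp R G₁ = upp R G₂ := by
    intro M F₁ F₂ G₁ G₂ hF₁ hFE₁ hF₂ hFE₂ hMF₁ hG₁ hG₂ hM
    obtain ⟨F₃, hF₃, hFE₃, hsub₃⟩ := closed_ex hE ((hfin F₁ hF₁).union (hfin F₂ hF₂))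
      (union_subset hFE₁ hFE₂)
    have h13 : upp R F₁ ⊆ upp R F₃ := upp_sub hT ((subset_union_left).trans hsub₃)
    have h23 : upp R F₂ ⊆ upp R F₃ := upp_sub hT ((subset_union_right).trans hsub₃)
    obtain ⟨G₃, hG₃⟩ := hS M hM F₃ hF₃ (hMF₁.trans h13)
    rw [SFam_upp_eq' h13 hG₁ hG₃, SFam_upp_eq' h23 hG₂ hG₃]
  -- each member of 𝒟 is contained in E
  have h𝒟E : ∀ D ∈ 𝒟, D ⊆ E := by
    rintro D ⟨Fa, Fb, F, G, hFa, hFaA, hFb, hFbB, hF, hFE, hMF, hG, rfl⟩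
    exact hG.2.2.1.trans (upp_subset_closed hCF hE hF hFE)
  -- 𝒟 is nonempty
  have h𝒟ne : 𝒟.Nonempty := by
    obtain ⟨Fa, hFa, hFaA, _⟩ := closed_ex hA finite_empty (empty_subset A)
    obtain ⟨Fb, hFb, hFbB, _⟩ := closed_ex hB finite_empty (empty_subset B)
    obtain ⟨F, G, hF, hFE, hsub, hG⟩ := hext Fa Fb hFa hFaA hFb hFbB
    exact ⟨upp R G, Fa, Fb, F, G, hFa, hFaA, hFb, hFbB, hF, hFE, hsub, hG, rfl⟩
  -- 𝒟 is directed
  have h𝒟dir : DirectedOn (· ⊆ ·) 𝒟 := by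
    rintro D₁ ⟨Fa₁, Fb₁, F₁, G₁, hFa₁, hFaA₁, hFb₁, hFbB₁, hF₁, hFE₁, hMF₁, hG₁, rfl⟩
      D₂ ⟨Fa₂, Fb₂, F₂, G₂, hFa₂, hFaA₂, hFb₂, hFbB₂, hF₂, hFE₂, hMF₂, hG₂, rfl⟩
    obtain ⟨Fa₃, hFa₃, hFaA₃, hsubA⟩ := closed_ex hA
      ((hfin Fa₁ hFa₁).union (hfin Fa₂ hFa₂)) (union_subset hFaA₁ hFaA₂)
    obtain ⟨Fb₃, hFb₃, hFbB₃, hsubB⟩ := closed_ex hB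
      ((hfin Fb₁ hFb₁).union (hfin Fb₂ hFb₂)) (union_subset hFbB₁ hFbB₂)
    obtain ⟨F₃, G₃, hF₃, hFE₃, hsub₃, hG₃⟩ := hext Fa₃ Fb₃ hFa₃ hFaA₃ hFb₃ hFbB₃
    refine ⟨upp R G₃, ⟨Fa₃, Fb₃, F₃, G₃, hFa₃, hFaA₃, hFb₃, hFbB₃, hF₃, hFE₃,
      hsub₃, hG₃, rfl⟩, ?_, ?_⟩
    -- it suffices to show upp R Gᵢ ⊆ upp R G₃ for i = 1, 2
    · -- M₁ = Fa₁ ∪ Fb₁ ⊆ upp R (Fa₃ ∪ Fb₃) ⊆ upp R G₃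
      have hM13 : Fa₁ ∪ Fb₁ ⊆ upp R (Fa₃ ∪ Fb₃) :=
        union_subset
          (((subset_union_left).trans hsubA).trans (upp_mono subset_union_left))
          (((subset_union_left).trans hsubB).trans (upp_mono subset_union_right))
      have hMG₃ : upp R (Fa₁ ∪ Fb₁) ⊆ upp R G₃ :=
        (upp_sub hT hM13).trans hG₃.2.1
      -- take common F̃ above F₁ and F₃ inside E
      obtain ⟨Ft, hFt, hFtE, hsubt⟩ := closed_ex hE
        ((hfin F₁ hF₁).union (hfin F₃ hF₃)) (union_subset hFE₁ hFE₃)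
      have h1t : upp R F₁ ⊆ upp R Ft := upp_sub hT ((subset_union_left).trans hsubt)
      have h3t : upp R F₃ ⊆ upp R Ft := upp_sub hT ((subset_union_right).trans hsubt)
      obtain ⟨Gt, hGt⟩ := hS (Fa₁ ∪ Fb₁) (pair_mem_joinSat hFa₁ hFb₁) Ft hFt
        (hMF₁.trans h1t)
      have heq : upp R G₁ = upp R Gt := SFam_upp_eq' h1t hG₁ hGt
      have : upp R Gt ⊆ upp R G₃ :=
        hGt.2.2.2 G₃ hG₃.1 hMG₃ (hG₃.2.2.1.trans h3t)
      rw [heq]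
      exact this
    · have hM23 : Fa₂ ∪ Fb₂ ⊆ upp R (Fa₃ ∪ Fb₃) :=
        union_subset
          (((subset_union_right).trans hsubA).trans (upp_mono subset_union_left))
          (((subset_union_right).trans hsubB).trans (upp_mono subset_union_right))
      have hMG₃ : upp R (Fa₂ ∪ Fb₂) ⊆ upp R G₃ :=
        (upp_sub hT hM23).trans hG₃.2.1
      obtain ⟨Ft, hFt, hFtE, hsubt⟩ := closed_ex hE
        ((hfin F₂ hF₂).union (hfin F₃ hF₃)) (union_subset hFE₂ hFE₃)
      have h2t : upp R F₂ ⊆ upp R Ft := upp_sub hT ((subset_union_left).trans hsubt)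
      have h3t : upp R F₃ ⊆ upp R Ft := upp_sub hT ((subset_union_right).trans hsubt)
      obtain ⟨Gt, hGt⟩ := hS (Fa₂ ∪ Fb₂) (pair_mem_joinSat hFa₂ hFb₂) Ft hFt
        (hMF₂.trans h2t)
      have heq : upp R G₂ = upp R Gt := SFam_upp_eq' h2t hG₂ hGt
      have : upp R Gt ⊆ upp R G₃ :=
        hGt.2.2.2 G₃ hG₃.1 hMG₃ (hG₃.2.2.1.trans h3t)
      rw [heq]
      exact this
  -- the join candidate
  have hsClosed : CFClosed R 𝓕 (⋃₀ 𝒟) := by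
    intro K hKfin hKsub
    obtain ⟨D, hD, hKD⟩ := exists_mem_of_finite_subset_sUnion h𝒟ne h𝒟dir hKfin hKsub
    obtain ⟨Fa, Fb, F, G, hFa, hFaA, hFb, hFbB, hF, hFE, hMF, hG, rfl⟩ := hD
    obtain ⟨H, hH, hKH, hHG⟩ := hCF.2.2.2 G hG.1 K hKfin hKD
    have hDmem : upp R G ∈ 𝒟 :=
      ⟨Fa, Fb, F, G, hFa, hFaA, hFb, hFbB, hF, hFE, hMF, hG, rfl⟩
    exact ⟨H, hH, hKH, (upp_sub hT hHG).trans (subset_sUnion_of_mem hDmem),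
      hHG.trans (subset_sUnion_of_mem hDmem)⟩
  refine ⟨⟨⋃₀ 𝒟, hsClosed⟩, ?_, ?_, ?_, ?_⟩
  · -- ⋃₀ 𝒟 ⊆ E
    show ⋃₀ 𝒟 ⊆ E
    exact sUnion_subset h𝒟E
  · -- A ⊆ ⋃₀ 𝒟
    show A ⊆ ⋃₀ 𝒟
    intro x hx
    obtain ⟨Fa, hFa, hFaA, hxFa⟩ := closed_ex hA (finite_singleton x)
      (singleton_subset_iff.mpr hx)
    obtain ⟨Fb, hFb, hFbB, _⟩ := closed_ex hB finite_empty (empty_subset B)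
    obtain ⟨F, G, hF, hFE, hsub, hG⟩ := hext Fa Fb hFa hFaA hFb hFbB
    have hxG : x ∈ upp R G :=
      hG.2.1 (upp_mono subset_union_left (hxFa (mem_singleton x)))
    exact ⟨upp R G, ⟨Fa, Fb, F, G, hFa, hFaA, hFb, hFbB, hF, hFE, hsub, hG, rfl⟩, hxG⟩
  · -- B ⊆ ⋃₀ 𝒟
    show B ⊆ ⋃₀ 𝒟
    intro x hx
    obtain ⟨Fb, hFb, hFbB, hxFb⟩ := closed_ex hB (finite_singleton x)
      (singleton_subset_iff.mpr hx)
    obtain ⟨Fa, hFa, hFaA, _⟩ := closed_ex hA finite_empty (empty_subset A)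
    obtain ⟨F, G, hF, hFE, hsub, hG⟩ := hext Fa Fb hFa hFaA hFb hFbB
    have hxG : x ∈ upp R G :=
      hG.2.1 (upp_mono subset_union_right (hxFb (mem_singleton x)))
    exact ⟨upp R G, ⟨Fa, Fb, F, G, hFa, hFaA, hFb, hFbB, hF, hFE, hsub, hG, rfl⟩, hxG⟩
  · -- minimality
    rintro ⟨t, ht⟩ htE hAt hBt
    replace htE : t ⊆ E := htE
    replace hAt : A ⊆ t := hAt
    replace hBt : B ⊆ t := hBt
    show ⋃₀ 𝒟 ⊆ t
    refine sUnion_subset ?_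
    rintro D ⟨Fa, Fb, F, G, hFa, hFaA, hFb, hFbB, hF, hFE, hMF, hG, rfl⟩
    -- M ⊆ t, so choose H ∈ 𝓕 with M ⊆ upp H, H ⊆ t
    obtain ⟨H, hH, hHt, hMH⟩ := closed_ex ht ((hfin Fa hFa).union (hfin Fb hFb))
      (union_subset (hFaA.trans hAt) (hFbB.trans hBt))
    -- common F' above H and F inside E
    obtain ⟨F', hF', hFE', hsub'⟩ := closed_ex hE
      ((hfin H hH).union (hfin F hF)) (union_subset (hHt.trans htE) hFE)
    have hH' : upp R H ⊆ upp R F' := upp_sub hT ((subset_union_left).trans hsub')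
    have hFF' : upp R F ⊆ upp R F' := upp_sub hT ((subset_union_right).trans hsub')
    obtain ⟨G', hG'⟩ := hS (Fa ∪ Fb) (pair_mem_joinSat hFa hFb) F' hF'
      (hMF.trans hFF')
    have heq : upp R G = upp R G' := SFam_upp_eq' hFF' hG hG'
    have hGH : upp R G' ⊆ upp R H :=
      hG'.2.2.2 H hH (upp_sub hT hMH) hH'
    rw [heq]
    exact hGH.trans (upp_subset_closed hCF ht hH hHt)
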